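/- Let M ≥ 1 be an integer and c > 0 a real constant. Define g : [1, ∞) → R by g(x) = [ M + 4M²(2M+1)·log(1 + (x−1)/(16M²(2M+1))) ] / [ (4x + 16M − 4)·exp( 2(x−1)c / (x + 4M − 1) ) ]. Then g is monotonically decreasing on [1, ∞), i.e., for all 1 ≤ x₁ ≤ x₂, g(x₂) ≤ g(x₁). -/

import Mathlib

set_option maxHeartbeats 1600000 in
/-- Monotonicity of the right-hand side of the ACCPM convergence criterion:
for `M ≥ 1` and `c > 0`, the function
`g(x) = (M + 4M²(2M+1) log(1 + (x-1)/(16M²(2M+1)))) / ((4x + 16M - 4) exp(2(x-1)c/(x+4M-1)))`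
is monotonically decreasing on `[1, ∞)`. -/
theorem accpm_criterion_rhs_antitone (M : ℕ) (hM : 1 ≤ M) (c : ℝ) (hc : 0 < c) :
    ∀ x₁ x₂ : ℝ, 1 ≤ x₁ → x₁ ≤ x₂ →
      ((M : ℝ) + 4 * (M : ℝ) ^ 2 * (2 * M + 1) *
            Real.log (1 + (x₂ - 1) / (16 * (M : ℝ) ^ 2 * (2 * M + 1)))) /
          ((4 * x₂ + 16 * M - 4) * Real.exp (2 * (x₂ - 1) * c / (x₂ + 4 * M - 1))) ≤
        ((M : ℝ) + 4 * (M : ℝ) ^ 2 * (2 * M + 1) *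
            Real.log (1 + (x₁ - 1) / (16 * (M : ℝ) ^ 2 * (2 * M + 1)))) /
          ((4 * x₁ + 16 * M - 4) * Real.exp (2 * (x₁ - 1) * c / (x₁ + 4 * M - 1))) := by
  intro x₁ x₂ hx₁ hx
  have hM1 : (1:ℝ) ≤ M := by exact_mod_cast hM
  have hx₂ : (1:ℝ) ≤ x₂ := le_trans hx₁ hx
  set A : ℝ := 4 * (M:ℝ)^2 * (2*M+1) with hAdef
  have hA : 0 < A := by nlinarith
  have h4A : 16 * (M:ℝ)^2 * (2*M+1) = 4 * A := by rw [hAdef]; ring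
  set t₁ : ℝ := x₁ - 1 with ht₁def
  set t₂ : ℝ := x₂ - 1 with ht₂def
  have ht₁ : 0 ≤ t₁ := by simp [ht₁def]; linarith
  have ht₂ : 0 ≤ t₂ := by simp [ht₂def]; linarith
  have htt : t₁ ≤ t₂ := by simp [ht₁def, ht₂def]; linarith
  -- lower bound for log: log(1+t/(4A)) ≥ t/(4A+t)
  have loglb : ∀ t : ℝ, 0 ≤ t → t / (4*A + t) ≤ Real.log (1 + t / (4*A)) := by
    intro t ht
    have hy : (0:ℝ) < 1 + t / (4*A) := by positivity
    have h1 : Real.log (1 + t / (4*A))⁻¹ ≤ (1 + t / (4*A))⁻¹ - 1 :=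
      Real.log_le_sub_one_of_pos (by positivity)
    rw [Real.log_inv] at h1
    have h2 : 1 - (1 + t / (4*A))⁻¹ ≤ Real.log (1 + t / (4*A)) := by linarith
    have h3 : 1 - (1 + t / (4*A))⁻¹ = t / (4*A + t) := by
      rw [inv_eq_one_div]
      field_simp
      ring
    linarith [h3 ▸ h2]
  -- log increment bound
  have logub : Real.log (1 + t₂ / (4*A)) - Real.log (1 + t₁ / (4*A))
      ≤ (t₂ - t₁) / (4*A + t₁) := by
    have ha : (0:ℝ) < 1 + t₁ / (4*A) := by positivity
    have hb : (0:ℝ) < 1 + t₂ / (4*A) := by positivity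
    have h1 : Real.log ((1 + t₂ / (4*A)) / (1 + t₁ / (4*A)))
        ≤ (1 + t₂ / (4*A)) / (1 + t₁ / (4*A)) - 1 :=
      Real.log_le_sub_one_of_pos (by positivity)
    rw [Real.log_div (ne_of_gt hb) (ne_of_gt ha)] at h1
    have h2 : (1 + t₂ / (4*A)) / (1 + t₁ / (4*A)) - 1 = (t₂ - t₁) / (4*A + t₁) := by
      field_simp
      ring
    linarith [h2 ▸ h1]
  set N₁ : ℝ := (M:ℝ) + A * Real.log (1 + t₁ / (4*A)) with hN₁
  set N₂ : ℝ := (M:ℝ) + A * Real.log (1 + t₂ / (4*A)) with hN₂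
  have hlog₁ : 0 ≤ Real.log (1 + t₁ / (4*A)) :=
    Real.log_nonneg (by linarith [div_nonneg ht₁ (by linarith : (0:ℝ) ≤ 4*A)])
  have hlog₂ : 0 ≤ Real.log (1 + t₂ / (4*A)) :=
    Real.log_nonneg (by linarith [div_nonneg ht₂ (by linarith : (0:ℝ) ≤ 4*A)])
  have hN₁pos : 0 < N₁ := by
    rw [hN₁]; nlinarith [mul_nonneg hA.le hlog₁]
  have hN₂pos : 0 < N₂ := by
    rw [hN₂]; nlinarith [mul_nonneg hA.le hlog₂]
  -- key pointwise inequality: A*(t₁+4M)/(4A+t₁) ≤ N₁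
  have hkey0 : A * (t₁ + 4*M) / (4*A + t₁) ≤ N₁ := by
    have h1 := loglb t₁ ht₁
    have hd : (0:ℝ) < 4*A + t₁ := by linarith
    rw [div_le_iff₀ hd]
    have h2 : A * (t₁ / (4*A + t₁)) ≤ A * Real.log (1 + t₁ / (4*A)) :=
      mul_le_mul_of_nonneg_left h1 hA.le
    have h3 : A * (t₁ / (4*A + t₁)) = A * t₁ / (4*A + t₁) := by ring
    have h4 : A * t₁ / (4*A + t₁) ≤ A * Real.log (1 + t₁ / (4*A)) := by rw [← h3]; exact h2
    rw [div_le_iff₀ hd] at h4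
    have hMt : 0 ≤ (M:ℝ) * t₁ := mul_nonneg (by linarith) ht₁
    rw [hN₁]; nlinarith
  -- key: N₂ * (t₁ + 4M) ≤ N₁ * (t₂ + 4M)
  have hkey : N₂ * (t₁ + 4*M) ≤ N₁ * (t₂ + 4*M) := by
    have hd : (0:ℝ) < 4*A + t₁ := by linarith
    have hsc : A * Real.log (1 + t₂ / (4*A)) - A * Real.log (1 + t₁ / (4*A))
        ≤ A * ((t₂ - t₁) / (4*A + t₁)) := by
      have := mul_le_mul_of_nonneg_left logub hA.le
      rw [mul_sub] at this
      linarith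
    have h1 : N₂ ≤ N₁ + A * (t₂ - t₁) / (4*A + t₁) := by
      rw [hN₁, hN₂]
      have heq : A * ((t₂ - t₁) / (4*A + t₁)) = A * (t₂ - t₁) / (4*A + t₁) := by ring
      linarith [heq ▸ hsc]
    have h2 : A * (t₂ - t₁) / (4*A + t₁) * (t₁ + 4*M) ≤ N₁ * (t₂ - t₁) := by
      have h3 : A * (t₂ - t₁) / (4*A + t₁) * (t₁ + 4*M)
          = (A * (t₁ + 4*M) / (4*A + t₁)) * (t₂ - t₁) := by ring
      rw [h3]
      exact mul_le_mul_of_nonneg_right hkey0 (by linarith)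
    have ht₁4M : (0:ℝ) ≤ t₁ + 4*M := by positivity
    calc N₂ * (t₁ + 4*M)
        ≤ (N₁ + A * (t₂ - t₁) / (4*A + t₁)) * (t₁ + 4*M) :=
          mul_le_mul_of_nonneg_right h1 ht₁4M
      _ = N₁ * (t₁ + 4*M) + A * (t₂ - t₁) / (4*A + t₁) * (t₁ + 4*M) := by ring
      _ ≤ N₁ * (t₁ + 4*M) + N₁ * (t₂ - t₁) := by linarith
      _ = N₁ * (t₂ + 4*M) := by ring
  -- exponent monotone
  have hden₁ : (0:ℝ) < x₁ + 4*M - 1 := by linarith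
  have hden₂ : (0:ℝ) < x₂ + 4*M - 1 := by linarith
  have hexp : 2 * (x₁ - 1) * c / (x₁ + 4*M - 1) ≤ 2 * (x₂ - 1) * c / (x₂ + 4*M - 1) := by
    rw [div_le_div_iff₀ hden₁ hden₂]
    have hdiff : 2 * (x₂ - 1) * c * (x₁ + 4*M - 1) - 2 * (x₁ - 1) * c * (x₂ + 4*M - 1)
        = 8 * (M:ℝ) * c * (x₂ - x₁) := by ring
    have hpr : (0:ℝ) ≤ 8 * (M:ℝ) * c * (x₂ - x₁) :=
      mul_nonneg (by positivity) (sub_nonneg.2 hx)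
    linarith
  set E₁ : ℝ := Real.exp (2 * (x₁ - 1) * c / (x₁ + 4*M - 1)) with hE₁
  set E₂ : ℝ := Real.exp (2 * (x₂ - 1) * c / (x₂ + 4*M - 1)) with hE₂
  have hE₁pos : 0 < E₁ := Real.exp_pos _
  have hE₂pos : 0 < E₂ := Real.exp_pos _
  have hEle : E₁ ≤ E₂ := Real.exp_le_exp.2 hexp
  have hD₁ : (0:ℝ) < 4*x₁ + 16*M - 4 := by linarith
  have hD₂ : (0:ℝ) < 4*x₂ + 16*M - 4 := by linarith
  -- rewrite the goal in terms of N, D, E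
  have hgoal : N₂ / ((4*x₂ + 16*M - 4) * E₂) ≤ N₁ / ((4*x₁ + 16*M - 4) * E₁) := by
    rw [div_le_div_iff₀ (by positivity) (by positivity)]
    have hDeq₁ : 4*x₁ + 16*(M:ℝ) - 4 = 4 * (t₁ + 4*M) := by rw [ht₁def]; ring
    have hDeq₂ : 4*x₂ + 16*(M:ℝ) - 4 = 4 * (t₂ + 4*M) := by rw [ht₂def]; ring
    rw [hDeq₁, hDeq₂]
    calc N₂ * (4 * (t₁ + 4*M) * E₁) = (N₂ * (t₁ + 4*M)) * (4 * E₁) := by ring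
      _ ≤ (N₁ * (t₂ + 4*M)) * (4 * E₁) :=
          mul_le_mul_of_nonneg_right hkey (by positivity)
      _ ≤ (N₁ * (t₂ + 4*M)) * (4 * E₂) := by
          have hnn : 0 ≤ N₁ * (t₂ + 4*M) :=
            mul_nonneg hN₁pos.le (by linarith : (0:ℝ) ≤ t₂ + 4*M)
          exact mul_le_mul_of_nonneg_left (by linarith) hnn
      _ = N₁ * (4 * (t₂ + 4*M) * E₂) := by ring
  have harg₁ : 1 + (x₁ - 1) / (16 * (M:ℝ)^2 * (2*M+1)) = 1 + t₁ / (4*A) := by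
    rw [h4A, ht₁def]
  have harg₂ : 1 + (x₂ - 1) / (16 * (M:ℝ)^2 * (2*M+1)) = 1 + t₂ / (4*A) := by
    rw [h4A, ht₂def]
  calc ((M:ℝ) + 4 * (M:ℝ)^2 * (2*M+1) * Real.log (1 + (x₂-1) / (16*(M:ℝ)^2*(2*M+1)))) /
        ((4*x₂ + 16*M - 4) * Real.exp (2*(x₂-1)*c / (x₂ + 4*M - 1)))
      = N₂ / ((4*x₂ + 16*M - 4) * E₂) := by rw [harg₂, hN₂, hE₂, hAdef]
    _ ≤ N₁ / ((4*x₁ + 16*M - 4) * E₁) := hgoal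
    _ = ((M:ℝ) + 4 * (M:ℝ)^2 * (2*M+1) * Real.log (1 + (x₁-1) / (16*(M:ℝ)^2*(2*M+1)))) /
        ((4*x₁ + 16*M - 4) * Real.exp (2*(x₁-1)*c / (x₁ + 4*M - 1))) := by
        rw [harg₁, hN₁, hE₁, hAdef]
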